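/- Suppose all edge weights satisfy w_e ≥ 1. Then for probability vectors α, β on a connected weighted graph and 1 ≤ p < ∞, the p-Beckmann distance satisfies B_p(α,β) ≤ W_p(α,β)^p, where W_p is the p-Wasserstein distance with respect to the weighted shortest-path metric d₁. -/

import Mathlib

open Matrix Finset

/-- A walk in a graph given by oriented edge endpoints `ends : Fin m → Fin n × Fin n`:
a list of steps, each an edge together with a direction of traversal. -/
def IsWalk {n m : ℕ} (ends : Fin m → Fin n × Fin n) :
    Fin n → Fin n → List (Fin m × Bool) → Prop
  | i, j, [] => i = j
  | i, j, (e, true) :: rest => (ends e).1 = i ∧ IsWalk ends (ends e).2 j rest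
  | i, j, (e, false) :: rest => (ends e).2 = i ∧ IsWalk ends (ends e).1 j rest

/-- The weighted 1-shortest-path distance `d₁(i,j)`: infimum of the total edge
weight over walks from `i` to `j`. -/
noncomputable def pathDist {n m : ℕ} (ends : Fin m → Fin n × Fin n)
    (w : Fin m → ℝ) (i j : Fin n) : ℝ :=
  sInf {c : ℝ | ∃ s : List (Fin m × Bool), IsWalk ends i j s ∧
    c = (s.map (fun q => w q.1)).sum}

namespace BWaux

variable {n m : ℕ}

/-- weighted p-norm -/
noncomputable def N (w : Fin m → ℝ) (p : ℝ) (J : Fin m → ℝ) : ℝ :=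
  (∑ e, w e * |J e| ^ p) ^ (1 / p)

lemma wabs (w : Fin m → ℝ) (hw : ∀ e, 0 ≤ w e) {p : ℝ} (hp : 0 < p) (J : Fin m → ℝ) (e : Fin m) :
    w e * |J e| ^ p = |(w e) ^ (1/p) * J e| ^ p := by
  rw [abs_mul, Real.mul_rpow (abs_nonneg _) (abs_nonneg _),
    abs_of_nonneg (Real.rpow_nonneg (hw e) _), one_div,
    Real.rpow_inv_rpow (hw e) hp.ne']

lemma sum_nn (w : Fin m → ℝ) (hw : ∀ e, 0 ≤ w e) (p : ℝ) (J : Fin m → ℝ) :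
    0 ≤ ∑ e, w e * |J e| ^ p :=
  Finset.sum_nonneg fun e _ => mul_nonneg (hw e) (Real.rpow_nonneg (abs_nonneg _) _)

lemma N_nonneg (w : Fin m → ℝ) (hw : ∀ e, 0 ≤ w e) (p : ℝ) (J : Fin m → ℝ) : 0 ≤ N w p J :=
  Real.rpow_nonneg (sum_nn w hw p J) _

lemma N_add_le (w : Fin m → ℝ) (hw : ∀ e, 0 ≤ w e) {p : ℝ} (hp : 1 ≤ p) (J K : Fin m → ℝ) :
    N w p (J + K) ≤ N w p J + N w p K := by
  have hp0 : 0 < p := lt_of_lt_of_le one_pos hp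
  have h := Real.Lp_add_le Finset.univ (fun e => (w e) ^ (1/p) * J e)
    (fun e => (w e) ^ (1/p) * K e) hp
  simp only [N]
  simp only [← mul_add] at h
  calc (∑ e, w e * |(J + K) e| ^ p) ^ (1/p)
      = (∑ e, |(w e) ^ (1/p) * (J e + K e)| ^ p) ^ (1/p) := by
        congr 1; refine Finset.sum_congr rfl fun e _ => ?_
        simpa using wabs w hw hp0 (J + K) e
    _ ≤ _ := by
        refine le_trans h (add_le_add (le_of_eq ?_) (le_of_eq ?_)) <;>
        · congr 1
          refine Finset.sum_congr rfl fun e _ => ?_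
          rw [← wabs w hw hp0]

lemma N_zero (w : Fin m → ℝ) {p : ℝ} (hp : 1 ≤ p) : N w p 0 = 0 := by
  have hp0 : p ≠ 0 := (lt_of_lt_of_le one_pos hp).ne'
  simp [N, Real.zero_rpow hp0, Real.zero_rpow (inv_ne_zero hp0)]

lemma N_smul (w : Fin m → ℝ) (hw : ∀ e, 0 ≤ w e) {p : ℝ} (hp : 1 ≤ p) {c : ℝ} (hc : 0 ≤ c)
    (J : Fin m → ℝ) : N w p (c • J) = c * N w p J := by
  have hp0 : 0 < p := lt_of_lt_of_le one_pos hp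
  have : ∀ e, w e * |(c • J) e| ^ p = c ^ p * (w e * |J e| ^ p) := by
    intro e
    simp only [Pi.smul_apply, smul_eq_mul, abs_mul, abs_of_nonneg hc,
      Real.mul_rpow hc (abs_nonneg _)]
    ring
  simp only [N, this, ← Finset.mul_sum]
  rw [Real.mul_rpow (Real.rpow_nonneg hc _) (sum_nn w hw p J), one_div,
    Real.rpow_rpow_inv hc hp0.ne']

lemma N_sum_le (w : Fin m → ℝ) (hw : ∀ e, 0 ≤ w e) {p : ℝ} (hp : 1 ≤ p)
    {ι : Type*} (s : Finset ι) (F : ι → Fin m → ℝ) :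
    N w p (∑ k ∈ s, F k) ≤ ∑ k ∈ s, N w p (F k) := by
  classical
  induction s using Finset.induction with
  | empty => simp [N_zero w hp]
  | insert _ _ hk ih =>
    rw [Finset.sum_insert hk, Finset.sum_insert hk]
    exact le_trans (N_add_le w hw hp _ _) (by gcongr)

def stepFlow (q : Fin m × Bool) : Fin m → ℝ :=
  fun e => if q.1 = e then (if q.2 then 1 else -1) else 0

def walkFlow : List (Fin m × Bool) → Fin m → ℝ
  | [] => 0
  | q :: rest => stepFlow q + walkFlow rest

/-- indicator -/
def dl (i : Fin n) : Fin n → ℝ := fun k => if i = k then 1 else 0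

lemma mulVec_stepFlow (ends : Fin m → Fin n × Fin n) (B : Matrix (Fin n) (Fin m) ℝ)
    (hB : ∀ i e, B i e =
      (if (ends e).1 = i then (1 : ℝ) else 0) - (if (ends e).2 = i then 1 else 0))
    (q : Fin m × Bool) :
    B.mulVec (stepFlow q) =
      if q.2 then dl (ends q.1).1 - dl (ends q.1).2 else dl (ends q.1).2 - dl (ends q.1).1 := by
  funext k
  have : ∀ e, B k e * stepFlow q e = if q.1 = e then B k e * (if q.2 then 1 else -1) else 0 := by
    intro e; by_cases h : q.1 = e <;> simp [stepFlow, h]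
  simp only [Matrix.mulVec, dotProduct, this, Finset.sum_ite_eq, Finset.mem_univ, if_true]
  rw [hB k q.1]
  cases q.2 <;> simp [dl, eq_comm]

lemma mulVec_walkFlow (ends : Fin m → Fin n × Fin n) (B : Matrix (Fin n) (Fin m) ℝ)
    (hB : ∀ i e, B i e =
      (if (ends e).1 = i then (1 : ℝ) else 0) - (if (ends e).2 = i then 1 else 0))
    (s : List (Fin m × Bool)) :
    ∀ i j : Fin n, IsWalk ends i j s → B.mulVec (walkFlow s) = dl i - dl j := by
  induction s with
  | nil =>
    intro i j h
    have : i = j := h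
    subst this; simp [walkFlow, Matrix.mulVec_zero]
  | cons q rest ih =>
    intro i j h
    obtain ⟨e, b⟩ := q
    cases b with
    | true =>
      obtain ⟨h1, h2⟩ := h
      rw [walkFlow, Matrix.mulVec_add, mulVec_stepFlow ends B hB, ih _ _ h2]
      simp only [if_true, h1]
      abel
    | false =>
      obtain ⟨h1, h2⟩ := h
      rw [walkFlow, Matrix.mulVec_add, mulVec_stepFlow ends B hB, ih _ _ h2]
      simp only [if_false, h1, Bool.false_eq_true]
      abel

lemma N_stepFlow_le (w : Fin m → ℝ) (hw : ∀ e, 1 ≤ w e) {p : ℝ} (hp : 1 ≤ p)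
    (q : Fin m × Bool) : N w p (stepFlow q) ≤ w q.1 := by
  have hp0 : 0 < p := lt_of_lt_of_le one_pos hp
  have hsum : ∑ e, w e * |stepFlow q e| ^ p = w q.1 := by
    rw [Finset.sum_eq_single q.1]
    · cases hb : q.2 <;> simp [stepFlow, hb]
    · intro e _ he
      simp [stepFlow, Ne.symm he, Real.zero_rpow hp0.ne']
    · simp
  rw [N, hsum]
  calc (w q.1) ^ (1/p) ≤ (w q.1) ^ (1:ℝ) :=
        Real.rpow_le_rpow_of_exponent_le (hw q.1) (by rw [div_le_one hp0]; exact hp)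
    _ = w q.1 := Real.rpow_one _

lemma N_walkFlow_le (w : Fin m → ℝ) (hw : ∀ e, 1 ≤ w e) {p : ℝ} (hp : 1 ≤ p)
    (s : List (Fin m × Bool)) :
    N w p (walkFlow s) ≤ (s.map (fun q => w q.1)).sum := by
  have hw0 : ∀ e, 0 ≤ w e := fun e => le_trans zero_le_one (hw e)
  induction s with
  | nil => simp [walkFlow, N_zero w hp]
  | cons q rest ih =>
    rw [walkFlow, List.map_cons, List.sum_cons]
    exact le_trans (N_add_le w hw0 hp _ _) (add_le_add (N_stepFlow_le w hw hp q) ih)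

end BWaux

open BWaux

/-- If all edge weights satisfy `w_e ≥ 1`, then for probability
vectors `α, β` on a connected weighted graph and `1 ≤ p < ∞`,
`B_p(α,β) ≤ W_p(α,β)^p`, where `W_p` is the `p`-Wasserstein distance for the
weighted shortest-path metric `d₁`. -/
theorem beckmann_le_wasserstein_pow
    (n m : ℕ) (ends : Fin m → Fin n × Fin n)
    (hloop : ∀ e, (ends e).1 ≠ (ends e).2)
    (w : Fin m → ℝ) (hw : ∀ e, 1 ≤ w e)
    (B : Matrix (Fin n) (Fin m) ℝ)
    (hB : ∀ i e, B i e =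
      (if (ends e).1 = i then (1 : ℝ) else 0) - (if (ends e).2 = i then 1 else 0))
    (hconn : ∀ i j : Fin n, ∃ s : List (Fin m × Bool), IsWalk ends i j s)
    (p : ℝ) (hp : 1 ≤ p)
    (α β : Fin n → ℝ)
    (hα : (∀ i, 0 ≤ α i) ∧ ∑ i, α i = 1)
    (hβ : (∀ i, 0 ≤ β i) ∧ ∑ i, β i = 1) :
    sInf {c : ℝ | ∃ J : Fin m → ℝ, B.mulVec J = α - β ∧
        c = (∑ e, w e * |J e| ^ p) ^ (1 / p)}
      ≤ (sInf {c : ℝ | ∃ π : Matrix (Fin n) (Fin n) ℝ,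
          (∀ i j, 0 ≤ π i j) ∧ (∀ i, ∑ j, π i j = α i) ∧ (∀ j, ∑ i, π i j = β j) ∧
          c = (∑ i, ∑ j, π i j * (pathDist ends w i j) ^ p) ^ (1 / p)}) ^ p := by
  classical
  obtain ⟨hα0, hα1⟩ := hα
  obtain ⟨hβ0, hβ1⟩ := hβ
  have hp0 : 0 < p := lt_of_lt_of_le one_pos hp
  have hw0 : ∀ e, 0 ≤ w e := fun e => le_trans zero_le_one (hw e)
  set SB := {c : ℝ | ∃ J : Fin m → ℝ, B.mulVec J = α - β ∧
      c = (∑ e, w e * |J e| ^ p) ^ (1 / p)} with hSBdef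
  set SW := {c : ℝ | ∃ π : Matrix (Fin n) (Fin n) ℝ,
      (∀ i j, 0 ≤ π i j) ∧ (∀ i, ∑ j, π i j = α i) ∧ (∀ j, ∑ i, π i j = β j) ∧
      c = (∑ i, ∑ j, π i j * (pathDist ends w i j) ^ p) ^ (1 / p)} with hSWdef
  set d := pathDist ends w with hd
  -- pathDist facts
  have hdset : ∀ i j : Fin n, {c : ℝ | ∃ s : List (Fin m × Bool), IsWalk ends i j s ∧
      c = (s.map (fun q => w q.1)).sum}.Nonempty := by
    intro i j
    obtain ⟨s, hs⟩ := hconn i j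
    exact ⟨_, s, hs, rfl⟩
  have hdnn : ∀ i j : Fin n, ∀ c ∈ {c : ℝ | ∃ s : List (Fin m × Bool), IsWalk ends i j s ∧
      c = (s.map (fun q => w q.1)).sum}, 0 ≤ c := by
    rintro i j c ⟨s, _, rfl⟩
    refine List.sum_nonneg ?_
    intro x hx
    obtain ⟨q, _, rfl⟩ := List.mem_map.1 hx
    exact hw0 q.1
  have hd0 : ∀ i j, 0 ≤ d i j := fun i j => Real.sInf_nonneg (hdnn i j)
  have hd1 : ∀ i j : Fin n, i ≠ j → 1 ≤ d i j := by
    intro i j hij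
    refine le_csInf (hdset i j) ?_
    rintro c ⟨s, hs, rfl⟩
    cases s with
    | nil => exact absurd hs hij
    | cons q rest =>
      rw [List.map_cons, List.sum_cons]
      have h1 : (1:ℝ) ≤ w q.1 := hw q.1
      have h2 : 0 ≤ (rest.map (fun q => w q.1)).sum := by
        refine List.sum_nonneg ?_
        intro x hx
        obtain ⟨r, _, rfl⟩ := List.mem_map.1 hx
        exact hw0 r.1
      linarith
  -- SB facts
  have hSBnn : ∀ c ∈ SB, 0 ≤ c := by
    rintro c ⟨J, _, rfl⟩
    exact N_nonneg w hw0 p J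
  have hSBbdd : BddBelow SB := ⟨0, fun c hc => hSBnn c hc⟩
  -- Step A : for every c in SW, sInf SB ≤ c ^ p
  have key : ∀ c ∈ SW, sInf SB ≤ c ^ p := by
    rintro c ⟨π, hπ0, hπr, hπc, rfl⟩
    set T := ∑ i, ∑ j, π i j * d i j ^ p with hT
    have hT0 : 0 ≤ T :=
      Finset.sum_nonneg fun i _ => Finset.sum_nonneg fun j _ =>
        mul_nonneg (hπ0 i j) (Real.rpow_nonneg (hd0 i j) _)
    have hcp : (T ^ (1/p)) ^ p = T := by
      rw [one_div, Real.rpow_inv_rpow hT0 hp0.ne']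
    rw [hcp]
    refine le_of_forall_pos_le_add ?_
    intro ε hε
    -- near optimal walks
    have hwalk : ∀ i j : Fin n, ∃ s : List (Fin m × Bool), IsWalk ends i j s ∧
        (s.map (fun q => w q.1)).sum ≤ d i j ^ p + ε := by
      intro i j
      by_cases hij : i = j
      · subst hij
        refine ⟨[], rfl, ?_⟩
        simp only [List.map_nil, List.sum_nil]
        have := Real.rpow_nonneg (hd0 i i) p
        linarith
      · have hlt : d i j < d i j + ε := lt_add_of_pos_right _ hε
        obtain ⟨c', hc', hclt⟩ := exists_lt_of_csInf_lt (hdset i j) hlt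
        obtain ⟨s, hs, rfl⟩ := hc'
        refine ⟨s, hs, ?_⟩
        have hle : d i j ≤ d i j ^ p := by
          calc d i j = d i j ^ (1:ℝ) := (Real.rpow_one _).symm
            _ ≤ d i j ^ p := Real.rpow_le_rpow_of_exponent_le (hd1 i j hij) hp
        linarith
    choose sw hsw hswlen using hwalk
    set J : Fin m → ℝ := ∑ q : Fin n × Fin n, π q.1 q.2 • walkFlow (sw q.1 q.2) with hJ
    have hdiv : B.mulVec J = α - β := by
      have h1 : B.mulVec J = ∑ q : Fin n × Fin n, π q.1 q.2 • B.mulVec (walkFlow (sw q.1 q.2)) := by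
        rw [hJ]
        simp only [← Matrix.mulVecLin_apply, map_sum, LinearMap.map_smul]
      rw [h1]
      have h2 : ∀ q : Fin n × Fin n,
          B.mulVec (walkFlow (sw q.1 q.2)) = dl q.1 - dl q.2 := fun q =>
        mulVec_walkFlow ends B hB _ _ _ (hsw q.1 q.2)
      funext k
      simp only [Finset.sum_apply, h2, Pi.smul_apply, Pi.sub_apply, smul_eq_mul, Pi.sub_apply]
      rw [Fintype.sum_prod_type]
      have : ∀ i j : Fin n, π i j * (dl i k - dl j k)
          = π i j * dl i k - π i j * dl j k := fun i j => by ring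
      simp only [this, Finset.sum_sub_distrib]
      have hA : ∑ i, ∑ j, π i j * dl i k = α k := by
        have : ∀ i : Fin n, ∑ j, π i j * dl i k = (if i = k then α i else 0) := by
          intro i
          by_cases hik : i = k
          · subst hik; simpa [dl] using hπr i
          · simp [dl, hik]
        rw [Finset.sum_congr rfl fun i _ => this i]
        simp
      have hBk : ∑ i, ∑ j, π i j * dl j k = β k := by
        rw [Finset.sum_comm]
        have : ∀ j : Fin n, ∑ i, π i j * dl j k = (if j = k then β j else 0) := by
          intro j
          by_cases hjk : j = k
          · subst hjk; simpa [dl] using hπc j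
          · simp [dl, hjk]
        rw [Finset.sum_congr rfl fun j _ => this j]
        simp
      rw [hA, hBk]
    have hNJ : N w p J ≤ T + ε := by
      have h1 : N w p J ≤ ∑ q : Fin n × Fin n, π q.1 q.2 * N w p (walkFlow (sw q.1 q.2)) := by
        refine le_trans (N_sum_le w hw0 hp _ _) (le_of_eq ?_)
        exact Finset.sum_congr rfl fun q _ => N_smul w hw0 hp (hπ0 q.1 q.2) _
      have h2 : ∑ q : Fin n × Fin n, π q.1 q.2 * N w p (walkFlow (sw q.1 q.2))
          ≤ ∑ q : Fin n × Fin n, π q.1 q.2 * (d q.1 q.2 ^ p + ε) := by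
        refine Finset.sum_le_sum fun q _ => ?_
        refine mul_le_mul_of_nonneg_left ?_ (hπ0 q.1 q.2)
        exact le_trans (N_walkFlow_le w hw hp _) (hswlen q.1 q.2)
      have h3 : ∑ q : Fin n × Fin n, π q.1 q.2 * (d q.1 q.2 ^ p + ε) = T + ε := by
        have hsum1 : ∑ q : Fin n × Fin n, π q.1 q.2 = 1 := by
          rw [Fintype.sum_prod_type]
          rw [Finset.sum_congr rfl fun i _ => hπr i]
          exact hα1
        have : ∀ q : Fin n × Fin n, π q.1 q.2 * (d q.1 q.2 ^ p + ε)
            = π q.1 q.2 * d q.1 q.2 ^ p + π q.1 q.2 * ε := fun q => by ring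
        rw [Finset.sum_congr rfl fun q _ => this q, Finset.sum_add_distrib,
          ← Finset.sum_mul, hsum1, one_mul]
        congr 1
        exact Fintype.sum_prod_type (f := fun q : Fin n × Fin n => π q.1 q.2 * d q.1 q.2 ^ p)
      exact le_trans h1 (le_trans h2 (le_of_eq h3))
    have hmem : N w p J ∈ SB := ⟨J, hdiv, rfl⟩
    exact le_trans (csInf_le hSBbdd hmem) hNJ
  -- SW nonempty and nonneg
  have hSWne : SW.Nonempty := by
    refine ⟨_, Matrix.of (fun i j => α i * β j), fun i j => mul_nonneg (hα0 i) (hβ0 j),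
      ?_, ?_, rfl⟩
    · intro i
      simp only [Matrix.of_apply]
      rw [← Finset.mul_sum, hβ1, mul_one]
    · intro j
      simp only [Matrix.of_apply]
      rw [← Finset.sum_mul, hα1, one_mul]
  have hSWnn : ∀ c ∈ SW, 0 ≤ c := by
    rintro c ⟨π, hπ0, _, _, rfl⟩
    refine Real.rpow_nonneg ?_ _
    exact Finset.sum_nonneg fun i _ => Finset.sum_nonneg fun j _ =>
      mul_nonneg (hπ0 i j) (Real.rpow_nonneg (hd0 i j) _)
  -- conclude
  have hL0 : 0 ≤ sInf SB := Real.sInf_nonneg hSBnn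
  have hlb : ∀ c ∈ SW, (sInf SB) ^ (1/p) ≤ c := by
    intro c hc
    have h1 : sInf SB ≤ c ^ p := key c hc
    have hc0 : 0 ≤ c := hSWnn c hc
    calc (sInf SB) ^ (1/p) ≤ (c ^ p) ^ (1/p) :=
          Real.rpow_le_rpow hL0 h1 (by positivity)
      _ = c := by rw [one_div, Real.rpow_rpow_inv hc0 hp0.ne']
  have hMle : (sInf SB) ^ (1/p) ≤ sInf SW := le_csInf hSWne hlb
  calc sInf SB = ((sInf SB) ^ (1/p)) ^ p := by
        rw [one_div, Real.rpow_inv_rpow hL0 hp0.ne']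
    _ ≤ (sInf SW) ^ p := Real.rpow_le_rpow (Real.rpow_nonneg hL0 _) hMle hp0.le
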